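/- Let m = m+ * m- be a product of r distinct odd primes, where every prime dividing m+ is 1 mod 4 and every prime dividing m- is 3 mod 4, with r(m+) >= 1 and r(m-) >= 1. Suppose rationals (v_d) are indexed by divisors d of m, v is an additive-in-disjoint-products valuation data with: ord_2(v_d) = r(d) - 1 whenever m- divides d and 1 < d < m, ord_2(v_d) > r(d) - 1 whenever m- does not divide d and 1 < d < m, and each v_d is multiplied by a factor of 2-adic valuation r(m/d) when d ranges over proper divisors (since ord_2(a_q - 2chi(q)) = 1 for each prime q | (m/d) in the relevant set S). Then the number of proper divisors d with 1 < d < m, m- | d, and 2 | r(d^-) equals 2^{r(m+)} - 1, and the 2-adic valuation of the sum Sum_{1 < d < m, m- | d} 2^{r(m/d)} v_d * (odd unit) equals r(m) - 1. -/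

import Mathlib

/-- The `2`-adic valuation on `ℚ`, with `ord2 0 = ⊤`. -/
noncomputable def ord2 (x : ℚ) : WithTop ℤ :=
  if x = 0 then ⊤ else (padicValRat 2 x : WithTop ℤ)

lemma ord2_zero : ord2 0 = ⊤ := if_pos rfl

lemma ord2_of_ne {x : ℚ} (hx : x ≠ 0) : ord2 x = (padicValRat 2 x : WithTop ℤ) := if_neg hx

lemma ord2_ne_zero {x : ℚ} {c : ℤ} (h : ord2 x = (c : WithTop ℤ)) : x ≠ 0 := by
  intro h0; rw [h0, ord2_zero] at h; exact (WithTop.top_ne_coe) h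

lemma ord2_mul (x y : ℚ) : ord2 (x * y) = ord2 x + ord2 y := by
  by_cases hx : x = 0
  · simp [hx, ord2_zero]
  by_cases hy : y = 0
  · simp [hy, ord2_zero]
  rw [ord2_of_ne hx, ord2_of_ne hy, ord2_of_ne (mul_ne_zero hx hy),
    padicValRat.mul hx hy, WithTop.coe_add]

lemma padicValRat_two : padicValRat 2 (2 : ℚ) = 1 := by
  have h := padicValRat.self (p := 2) one_lt_two
  norm_num at h
  exact_mod_cast h

lemma ord2_two_pow (n : ℕ) : ord2 ((2 : ℚ) ^ n) = ((n : ℤ) : WithTop ℤ) := by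
  rw [ord2_of_ne (pow_ne_zero _ two_ne_zero), padicValRat.pow (q := 2), padicValRat_two]
  norm_num

lemma ord2_add_eq {x y : ℚ} {c : ℤ} (hx : ord2 x = (c : WithTop ℤ))
    (hy : (c : WithTop ℤ) < ord2 y) : ord2 (x + y) = (c : WithTop ℤ) := by
  have hx0 : x ≠ 0 := ord2_ne_zero hx
  by_cases hy0 : y = 0
  · simpa [hy0] using hx
  have hvx : padicValRat 2 x = c := by
    rw [ord2_of_ne hx0] at hx; exact WithTop.coe_eq_coe.mp hx
  have hvy : c < padicValRat 2 y := by
    rw [ord2_of_ne hy0] at hy; exact WithTop.coe_lt_coe.mp hy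
  have hxy : x + y ≠ 0 := by
    intro h
    have hyx : y = -x := by linarith [add_eq_zero_iff_eq_neg.mp h]
    rw [hyx, ord2_of_ne (neg_ne_zero.mpr hx0), padicValRat.neg, hvx] at hy
    exact lt_irrefl _ hy
  rw [ord2_of_ne hxy, padicValRat.add_eq_of_lt hxy hx0 hy0 (hvx ▸ hvy), hvx]

lemma one_le_padicValRat_add_one {w : ℚ} (hvw : padicValRat 2 w = 0) (hw0 : w ≠ 0)
    (hsum : w + 1 ≠ 0) : 1 ≤ padicValRat 2 (w + 1) := by
  have hden0 : ((w.den : ℤ) : ℚ) ≠ 0 := by exact_mod_cast w.den_nz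
  have hnum0 : w.num ≠ 0 := Rat.num_ne_zero.mpr hw0
  have hval : (padicValInt 2 w.num : ℤ) - padicValNat 2 w.den = 0 := by
    rw [← padicValRat_def]; exact hvw
  have hcop : Nat.Coprime w.num.natAbs w.den := w.reduced
  have hdvd_iff : (2 : ℤ) ∣ w.num ↔ 2 ∣ w.num.natAbs := by
    rw [← Int.natAbs_dvd_natAbs]; norm_num
  have hndvd_den : ¬ (2 ∣ w.den) := by
    intro h2
    have h1 : 1 ≤ padicValNat 2 w.den := one_le_padicValNat_of_dvd w.den_nz h2
    have hn : ¬ (2 ∣ w.num.natAbs) := fun h => Nat.Prime.not_dvd_one Nat.prime_two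
      (hcop ▸ Nat.dvd_gcd h h2)
    have : padicValInt 2 w.num = 0 := by
      rw [padicValInt, padicValNat.eq_zero_iff]
      exact Or.inr (Or.inr hn)
    omega
  have hvden : padicValNat 2 w.den = 0 := by
    rw [padicValNat.eq_zero_iff]; exact Or.inr (Or.inr hndvd_den)
  have hndvd_num : ¬ ((2:ℤ) ∣ w.num) := by
    rw [hdvd_iff]
    intro h
    have : 1 ≤ padicValNat 2 w.num.natAbs :=
      one_le_padicValNat_of_dvd (Int.natAbs_ne_zero.mpr hnum0) h
    rw [padicValInt] at hval
    omega
  have hndvd_den' : ¬ ((2:ℤ) ∣ (w.den : ℤ)) := by exact_mod_cast hndvd_den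
  have hdvd_sum : (2 : ℤ) ∣ (w.num + (w.den : ℤ)) := by omega
  have heq : w + 1 = ((w.num + (w.den : ℤ) : ℤ) : ℚ) / ((w.den : ℤ) : ℚ) := by
    push_cast
    rw [add_div, Rat.num_div_den, div_self (by exact_mod_cast w.den_nz : ((w.den:ℕ):ℚ) ≠ 0)]
  have hns0 : (w.num + (w.den : ℤ)) ≠ 0 := by
    intro h
    apply hsum
    rw [heq, h]; simp
  rw [heq, padicValRat.div (by exact_mod_cast hns0) hden0,
    padicValRat.of_int, padicValRat.of_int]
  have h2 : padicValInt 2 (w.den : ℤ) = 0 := by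
    rw [padicValInt.of_nat]; exact hvden
  have h3 : 1 ≤ padicValInt 2 (w.num + (w.den : ℤ)) := by
    rw [padicValInt]
    refine one_le_padicValNat_of_dvd (Int.natAbs_ne_zero.mpr hns0) ?_
    have := Int.natAbs_dvd_natAbs.mpr hdvd_sum
    simpa using this
  omega

lemma ord2_add_lt {x y : ℚ} {c : ℤ} (hx : ord2 x = (c : WithTop ℤ))
    (hy : ord2 y = (c : WithTop ℤ)) : (c : WithTop ℤ) < ord2 (x + y) := by
  have hx0 : x ≠ 0 := ord2_ne_zero hx
  have hy0 : y ≠ 0 := ord2_ne_zero hy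
  by_cases hxy : x + y = 0
  · rw [hxy, ord2_zero]; exact WithTop.coe_lt_top c
  have hvx : padicValRat 2 x = c := by rw [ord2_of_ne hx0] at hx; exact WithTop.coe_eq_coe.mp hx
  have hvy : padicValRat 2 y = c := by rw [ord2_of_ne hy0] at hy; exact WithTop.coe_eq_coe.mp hy
  have hw0 : x / y ≠ 0 := div_ne_zero hx0 hy0
  have hvw : padicValRat 2 (x / y) = 0 := by
    rw [padicValRat.div hx0 hy0, hvx, hvy, sub_self]
  have hwsum : x / y + 1 = (x + y) / y := by field_simp
  have hsum_ne : x / y + 1 ≠ 0 := by rw [hwsum]; exact div_ne_zero hxy hy0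
  have h1 := one_le_padicValRat_add_one hvw hw0 hsum_ne
  have hfact : x + y = y * (x / y + 1) := by
    rw [hwsum, mul_div_cancel₀ _ hy0]
  rw [hfact, ord2_of_ne (hfact ▸ hxy), padicValRat.mul hy0 hsum_ne, hvy]
  exact WithTop.coe_lt_coe.mpr (by omega)

lemma ord2_sum {α : Type*} {c : ℤ} (s : Finset α) (f : α → ℚ)
    (h : ∀ a ∈ s, ord2 (f a) = (c : WithTop ℤ)) :
    (Odd s.card → ord2 (∑ a ∈ s, f a) = (c : WithTop ℤ)) ∧
    (Even s.card → (c : WithTop ℤ) < ord2 (∑ a ∈ s, f a)) := by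
  induction s using Finset.cons_induction with
  | empty =>
    refine ⟨fun hodd => absurd hodd (by simp), fun _ => ?_⟩
    rw [Finset.sum_empty, ord2_zero]; exact WithTop.coe_lt_top c
  | cons a s ha ih =>
    obtain ⟨ih1, ih2⟩ := ih (fun b hb => h b (Finset.mem_cons_of_mem hb))
    have hfa : ord2 (f a) = (c : WithTop ℤ) := h a (Finset.mem_cons_self a s)
    rw [Finset.sum_cons, Finset.card_cons]
    constructor
    · intro hodd
      have : Even s.card := by
        rcases Nat.even_or_odd s.card with he | ho
        · exact he
        · exact absurd hodd (by simp [Nat.odd_add_one, Nat.not_even_iff_odd.mpr ho])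
      exact ord2_add_eq hfa (ih2 this)
    · intro heven
      have : Odd s.card := by
        rcases Nat.even_or_odd s.card with he | ho
        · exact absurd heven (by simp [Nat.even_add_one, Nat.not_odd_iff_even.mpr he])
        · exact ho
      exact ord2_add_lt hfa (ih1 this)

lemma sf_card_divisors {n : ℕ} (hn : Squarefree n) :
    n.divisors.card = 2 ^ n.primeFactors.card := by
  rw [Nat.card_divisors hn.ne_zero,
    Finset.prod_congr rfl (fun p hp => (?_ : n.factorization p + 1 = 2)), Finset.prod_const]
  have h1 : n.factorization p ≤ 1 := hn.natFactorization_le_one p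
  have h2 : n.factorization p ≠ 0 :=
    Finsupp.mem_support_iff.mp (by rw [Nat.support_factorization]; exact hp)
  omega

theorem ord2_sum_eq_r_sub_one
    (mp mm : ℕ) (hp : Squarefree mp) (hm : Squarefree mm) (hco : mp.Coprime mm)
    (h1 : 1 < mp) (h1' : 1 < mm)
    (hpmod : ∀ p ∈ mp.primeFactors, p % 4 = 1)
    (hmmod : ∀ p ∈ mm.primeFactors, p % 4 = 3)
    (v u : ℕ → ℚ)
    (hv : ∀ d ∈ (mp * mm).divisors, mm ∣ d → d ≠ mp * mm →
      ord2 (v d) = ((d.primeFactors.card : ℤ) - 1 : ℤ))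
    (hv' : ∀ d ∈ (mp * mm).divisors, 1 < d → d ≠ mp * mm → ¬ mm ∣ d →
      (((d.primeFactors.card : ℤ) - 1 : ℤ) : WithTop ℤ) < ord2 (v d))
    (hu : ∀ d, ord2 (u d) = (0 : ℤ)) :
    ((mp * mm).divisors.filter (fun d => mm ∣ d ∧ d ≠ mp * mm)).card
        = 2 ^ mp.primeFactors.card - 1 ∧
    Odd (2 ^ mp.primeFactors.card - 1) ∧
    ord2 (∑ d ∈ (mp * mm).divisors.filter (fun d => mm ∣ d ∧ d ≠ mp * mm),
        (2 : ℚ) ^ ((mp * mm) / d).primeFactors.card * v d * u d)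
      = ((((mp * mm).primeFactors.card : ℤ) - 1 : ℤ) : WithTop ℤ) := by
  have hmp0 : mp ≠ 0 := by omega
  have hmm0 : mm ≠ 0 := by omega
  have hm0 : mp * mm ≠ 0 := by positivity
  have hsf : Squarefree (mp * mm) := (Nat.squarefree_mul hco).mpr ⟨hp, hm⟩
  have hk1 : 1 ≤ mp.primeFactors.card :=
    Finset.card_pos.mpr (Nat.nonempty_primeFactors.mpr h1)
  -- the count
  have hcount : ((mp * mm).divisors.filter (fun d => mm ∣ d ∧ d ≠ mp * mm)).card
      = 2 ^ mp.primeFactors.card - 1 := by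
    have hbij : ((mp * mm).divisors.filter (fun d => mm ∣ d ∧ d ≠ mp * mm)).card
        = (mp.divisors.erase mp).card := by
      apply Finset.card_bij' (fun d _ => d / mm) (fun e _ => e * mm)
      · intro d hd
        rw [Finset.mem_filter, Nat.mem_divisors] at hd
        obtain ⟨⟨hdvd, hne0⟩, ⟨e, rfl⟩, hdne⟩ := hd
        rw [Nat.mul_div_cancel_left e (by omega), Finset.mem_erase, Nat.mem_divisors]
        have hedvd : e ∣ mp := by
          have : e * mm ∣ mp * mm := by rwa [mul_comm mm e] at hdvd
          exact (Nat.mul_dvd_mul_iff_right (by omega : 0 < mm)).mp this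
        refine ⟨fun h => hdne ?_, hedvd, hmp0⟩
        rw [h, mul_comm]
      · intro e he
        rw [Finset.mem_erase, Nat.mem_divisors] at he
        obtain ⟨hne, hedvd, _⟩ := he
        rw [Finset.mem_filter, Nat.mem_divisors]
        exact ⟨⟨mul_dvd_mul hedvd dvd_rfl, hm0⟩, dvd_mul_left mm e,
          fun h => hne (Nat.eq_of_mul_eq_mul_right (by omega) h)⟩
      · intro d hd
        rw [Finset.mem_filter] at hd
        exact Nat.div_mul_cancel hd.2.1
      · intro e he
        exact Nat.mul_div_cancel e (by omega)
    rw [hbij, Finset.card_erase_of_mem (Nat.mem_divisors_self mp hmp0), sf_card_divisors hp]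
  have hodd : Odd (2 ^ mp.primeFactors.card - 1) :=
    Nat.Even.sub_odd (Nat.one_le_two_pow) (Nat.even_pow.mpr ⟨even_two, by omega⟩) odd_one
  refine ⟨hcount, hodd, ?_⟩
  have hterm : ∀ d ∈ (mp * mm).divisors.filter (fun d => mm ∣ d ∧ d ≠ mp * mm),
      ord2 ((2 : ℚ) ^ ((mp * mm) / d).primeFactors.card * v d * u d)
        = ((((mp * mm).primeFactors.card : ℤ) - 1 : ℤ) : WithTop ℤ) := by
    intro d hd
    have hdmem := (Finset.mem_filter.mp hd).1
    obtain ⟨hmmd, hdne⟩ := (Finset.mem_filter.mp hd).2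
    have hddvd : d ∣ mp * mm := (Nat.mem_divisors.mp hdmem).1
    have hd0 : d ≠ 0 := (Nat.pos_of_mem_divisors hdmem).ne'
    have he : d * ((mp * mm) / d) = mp * mm := Nat.mul_div_cancel' hddvd
    have he0 : (mp * mm) / d ≠ 0 := by
      intro h; rw [h, mul_zero] at he; exact hm0 he.symm
    have hcards : d.primeFactors.card + ((mp * mm) / d).primeFactors.card
        = (mp * mm).primeFactors.card := by
      conv_rhs => rw [← he]
      rw [Nat.primeFactors_mul hd0 he0,
        Finset.card_union_of_disjoint
          (Nat.coprime_of_squarefree_mul (show Squarefree (d * ((mp * mm) / d)) by rwa [he])).disjoint_primeFactors]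
    rw [ord2_mul, ord2_mul, ord2_two_pow, hv d hdmem hmmd hdne, hu d,
      ← WithTop.coe_add, ← WithTop.coe_add, WithTop.coe_eq_coe]
    push_cast
    omega
  have := (ord2_sum _ _ hterm).1
  rw [hcount] at this
  exact this hodd
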